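/- In a Merkle tree over a list of leaves, if a leaf value together with a sibling-hash path recomputes to the root, and the hash function is injective (collision-free), then the leaf value equals the value stored at the corresponding position in the list. -/
import Mathlib


inductive MerkleTree (α : Type*) where
  | leaf (d : α)
  | node (l r : MerkleTree α)

inductive MerkleSide where
  | left
  | right

def MerkleTree.rootHash {α Digest : Type*} (h₀ : α → Digest)
    (h : Digest → Digest → Digest) : MerkleTree α → Digest
  | .leaf d => h₀ d
  | .node l r => h (l.rootHash h₀ h) (r.rootHash h₀ h)

/-- Verification of a leaf value against a path of (side, sibling digest) pairs,
ordered from the root down to the leaf. `(.left, d)` means the leaf lies in the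
left subtree and `d` is the digest of the right sibling. -/
def merkleVerify {α Digest : Type*} (h₀ : α → Digest)
    (h : Digest → Digest → Digest) (x : α) :
    List (MerkleSide × Digest) → Digest
  | [] => h₀ x
  | (.left, d) :: p => h (merkleVerify h₀ h x p) d
  | (.right, d) :: p => h d (merkleVerify h₀ h x p)

/-- Following a path (root-first) through a tree, reaching a leaf value. -/
def MerkleTree.follow {α Digest : Type*} :
    MerkleTree α → List (MerkleSide × Digest) → Option α
  | .leaf d, [] => some d
  | .node l _, (.left, _) :: p => l.follow p
  | .node _ r, (.right, _) :: p => r.follow p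
  | _, _ => none

theorem merkle_path_locates_leaf {α Digest : Type*}
    (h₀ : α → Digest) (h : Digest → Digest → Digest)
    (hinj₀ : Function.Injective h₀)
    (hinj : Function.Injective (fun p : Digest × Digest => h p.1 p.2))
    (hdisj : ∀ (a : α) (d₁ d₂ : Digest), h₀ a ≠ h d₁ d₂)
    (T : MerkleTree α) (x : α) (p : List (MerkleSide × Digest))
    (hver : merkleVerify h₀ h x p = T.rootHash h₀ h) :
    T.follow p = some x := by
  induction p generalizing T with
  | nil =>
    cases T with
    | leaf d =>
      simp [merkleVerify, MerkleTree.rootHash] at hver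
      simp [MerkleTree.follow, hinj₀ hver]
    | node l r =>
      exact absurd hver (hdisj x _ _)
  | cons hd tl ih =>
    obtain ⟨s, d⟩ := hd
    cases T with
    | leaf d' =>
      cases s <;> simp [merkleVerify, MerkleTree.rootHash] at hver <;>
        exact absurd hver.symm (hdisj d' _ _)
    | node l r =>
      cases s with
      | left =>
        simp [merkleVerify, MerkleTree.rootHash] at hver
        have := hinj (a₁ := (merkleVerify h₀ h x tl, d))
          (a₂ := (l.rootHash h₀ h, r.rootHash h₀ h)) hver
        simp at this
        exact ih l this.1
      | right =>
        simp [merkleVerify, MerkleTree.rootHash] at hver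
        have := hinj (a₁ := (d, merkleVerify h₀ h x tl))
          (a₂ := (l.rootHash h₀ h, r.rootHash h₀ h)) hver
        simp at this
        exact ih r this.2
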